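/- Let M be a timelike surface in ℝ^{n,1} with a canonical null direction. If the mean curvature vector H is parallel in the normal bundle (∇^⊥ H = 0), then M is minimal, i.e. H = 0. -/
import Mathlib


/-- If the mean curvature vector H = -II(Z^⊤,W) is parallel in the normal bundle,
then the surface is minimal: H = 0. -/
theorem stmt7
    (Mp T Nv : Type)
    [AddCommGroup T] [Module (Mp → ℝ) T]
    [AddCommGroup Nv] [Module (Mp → ℝ) Nv]
    -- the induced (Lorentzian) metric on tangent fields and the (Riemannian) metric on normal fields
    (g : T → T → Mp → ℝ) (gN : Nv → Nv → Mp → ℝ)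
    -- Levi-Civita connection of M, normal connection, second fundamental form, shape operator
    (D : T → T → T) (Dn : T → Nv → Nv)
    (II : T → T → Nv) (A : Nv → T → T)
    -- action of vector fields on functions, Lie bracket, gradient
    (d : T → (Mp → ℝ) → Mp → ℝ) (lie : T → T → T) (grad : (Mp → ℝ) → T)
    -- the tangent and normal parts of Z and the lightlike field W
    (ZT W : T) (ZP : Nv)
    (g_symm : ∀ X Y, g X Y = g Y X)
    (gN_symm : ∀ μ ν, gN μ ν = gN ν μ)
    (gN_def : ∀ ν : Nv, gN ν ν = 0 → ν = 0)
    (II_symm : ∀ X Y, II X Y = II Y X)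
    (shape : ∀ ν X Y, g (A ν X) Y = gN (II X Y) ν)
    (metr : ∀ X Y Y', d X (g Y Y') = g (D X Y) Y' + g Y (D X Y'))
    (metrN : ∀ X μ ν, d X (gN μ ν) = gN (Dn X μ) ν + gN μ (Dn X ν))
    (tors : ∀ X Y, lie X Y = D X Y - D Y X)
    (dconst : ∀ X (c : ℝ), d X (fun _ => c) = 0)
    (grad_def : ∀ h X, g (grad h) X = d X h)
    -- (Z^⊤, W) is a frame of lightlike tangent fields with ⟨Z^⊤, W⟩ = -1
    (frame : ∀ v : T, v = (-(g v W)) • ZT + (-(g v ZT)) • W)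
    (hZT : g ZT ZT = 0) (hZTne : ZT ≠ 0)
    (hW : g W W = 0) (hWne : W ≠ 0)
    (hZTW : g ZT W = fun _ => (-1 : ℝ))
    -- Z is unit spacelike, so Z^⊥ is a unit normal field
    (hZP : gN ZP ZP = fun _ => (1 : ℝ))
    -- the compatibility equations coming from Z being a constant vector field
    (compat1 : ∀ X, D X ZT = A ZP X)
    (compat2 : ∀ X, Dn X ZP = -(II ZT X))
    -- Codazzi equation (the ambient space is flat)
    (codazzi : ∀ X Y Y', Dn X (II Y Y') - II (D X Y) Y' - II Y (D X Y')
        = Dn Y (II X Y') - II (D Y X) Y' - II X (D Y Y'))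
    (hpar : ∀ X, Dn X (-(II ZT W)) = 0) :
    -(II ZT W) = (0 : Nv) := by
  -- the gradient of the zero function pairs to zero with everything
  have hd0 : ∀ X : T, g (grad (fun _ => (0:ℝ))) X = 0 := by
    intro X; rw [grad_def, dconst]
  -- hence it is the zero tangent field
  have hgrad0 : grad (fun _ => (0:ℝ)) = (0:T) := by
    have h := frame (grad (fun _ => (0:ℝ)))
    rw [hd0 W, hd0 ZT] at h
    simpa using h
  -- so g pairs zero with anything to zero
  have hg0 : ∀ X : T, g (0:T) X = 0 := by
    intro X; rw [← hgrad0]; exact hd0 X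
  -- II ZT 0 = 0
  have hII0 : II ZT (0:T) = 0 := by
    apply gN_def
    rw [← shape, g_symm]
    exact hg0 _
  -- Dn 0 ZP = 0
  have hDn0 : Dn (0:T) ZP = 0 := by rw [compat2, hII0, neg_zero]
  -- Dn X ZP is gN-orthogonal to ZP for every X
  have hDnZP : ∀ X : T, gN (Dn X ZP) ZP = 0 := by
    intro X
    have h := metrN X ZP ZP
    rw [hZP, dconst, gN_symm ZP (Dn X ZP)] at h
    funext p
    have hp := congrFun h p
    simp only [Pi.add_apply, Pi.zero_apply] at hp ⊢
    linarith
  -- gN 0 ZP = 0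
  have h0ZP : gN (0:Nv) ZP = 0 := by rw [← hDn0]; exact hDnZP 0
  -- H = -(II ZT W) is gN-orthogonal to ZP
  have hmu : gN (-(II ZT W)) ZP = 0 := by
    rw [← compat2]; exact hDnZP W
  -- main identity
  have key := metrN W (-(II ZT W)) ZP
  rw [hmu, hpar W, compat2 W, h0ZP] at key
  have hd00 : d W (0 : Mp → ℝ) = 0 := dconst W 0
  rw [hd00, zero_add] at key
  exact gN_def _ key.symm
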